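/- Topological dynamics multidimensional Brown's lemma: Let (X,d) be a compact metric space and T₁,…,T_l pairwise commuting homeomorphisms of X. Given ε > 0, there exists q ∈ ℕ such that for each k ∈ ℕ there exist a point x_k ∈ X and, for each i ∈ {1,…,l}, integers u^i_1,…,u^i_l with |u^i_j| ≤ q for all j, satisfying d(x_k, T_i^k(T_1^{u^i_1}(⋯(T_l^{u^i_l}(x_k))⋯))) < ε for all i ∈ {1,…,l}; moreover the points x_k can be chosen so that d(x_k, x_{k'}) < ε for all k, k' ∈ ℕ. -/

import Mathlib

private lemma brown_prod_add {M : Type*} [Group M] : ∀ {n : ℕ} (T : Fin n → M),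
    (∀ i j, Commute (T i) (T j)) → ∀ v w : Fin n → ℤ,
    (List.ofFn fun j => T j ^ (v j + w j)).prod
      = (List.ofFn fun j => T j ^ (v j)).prod * (List.ofFn fun j => T j ^ (w j)).prod
  | 0, _, _, _, _ => by simp
  | n + 1, T, h, v, w => by
    simp only [List.ofFn_succ, List.prod_cons]
    rw [brown_prod_add (fun i => T i.succ) (fun i j => h _ _)
      (fun i => v i.succ) (fun i => w i.succ), zpow_add]
    have hc : Commute (T 0 ^ (w 0)) (List.ofFn fun j : Fin n => T j.succ ^ (v j.succ)).prod := by
      refine Commute.list_prod_right _ _ ?_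
      intro x hx
      rw [List.mem_ofFn] at hx
      obtain ⟨j, rfl⟩ := hx
      exact (h 0 j.succ).zpow_zpow _ _
    exact hc.mul_mul_mul_comm _ _

private lemma brown_prod_single {M : Type*} [Monoid M] : ∀ {n : ℕ} (f : Fin n → M) (i : Fin n),
    (∀ j, j ≠ i → f j = 1) → (List.ofFn f).prod = f i
  | 0, _, i, _ => i.elim0
  | n + 1, f, i, h => by
    simp only [List.ofFn_succ, List.prod_cons]
    rcases i.eq_zero_or_eq_succ with rfl | ⟨j, rfl⟩
    · rw [List.prod_eq_one, mul_one]
      intro x hx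
      rw [List.mem_ofFn] at hx
      obtain ⟨m, rfl⟩ := hx
      exact h m.succ (Fin.succ_ne_zero m)
    · rw [h 0 (Fin.succ_ne_zero j).symm, one_mul]
      exact brown_prod_single (fun m => f m.succ) j
        (fun m hm => h m.succ (fun hc => hm (Fin.succ_injective _ hc)))

private lemma brown_cont_pow {X : Type*} [TopologicalSpace X] (σ : Equiv.Perm X)
    (h : Continuous σ) : ∀ n : ℕ, Continuous ⇑(σ ^ n)
  | 0 => by simpa using continuous_id
  | n + 1 => by
    rw [pow_succ, Equiv.Perm.coe_mul]
    exact (brown_cont_pow σ h n).comp h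

private lemma brown_cont_zpow {X : Type*} [TopologicalSpace X] (σ : Equiv.Perm X)
    (h : Continuous σ) (h' : Continuous σ.symm) (m : ℤ) : Continuous ⇑(σ ^ m) := by
  obtain ⟨n, rfl | rfl⟩ := m.eq_nat_or_neg
  · rw [zpow_natCast]; exact brown_cont_pow σ h n
  · rw [zpow_neg, zpow_natCast, ← inv_pow]
    refine brown_cont_pow σ⁻¹ ?_ n
    have : (σ⁻¹ : Equiv.Perm X) = σ.symm := rfl
    rw [this]; exact h'

private lemma brown_cont_list_prod {X : Type*} [TopologicalSpace X] :
    ∀ L : List (Equiv.Perm X), (∀ σ ∈ L, Continuous ⇑σ) → Continuous ⇑L.prod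
  | [], _ => by simpa using continuous_id
  | σ :: L, h => by
    rw [List.prod_cons, Equiv.Perm.coe_mul]
    exact (h σ List.mem_cons_self).comp
      (brown_cont_list_prod L fun τ hτ => h τ (List.mem_cons_of_mem _ hτ))

/-- **Topological dynamics multidimensional Brown's lemma.** Let `X` be a compact
metric space and `T 1, …, T l` pairwise commuting homeomorphisms of `X` (given as
bijections `T i : Equiv.Perm X` that are continuous with continuous inverse).
Given `ε > 0`, there exists `q ∈ ℕ` such that for each `k ∈ ℕ` there exist a point
`x k ∈ X` and integers `u i j` with `|u i j| ≤ q`, satisfying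
`d(x k, T i ^ k (T 1 ^ (u i 1) (⋯ (T l ^ (u i l) (x k)) ⋯))) < ε` for all `i`;
moreover `d(x k, x k') < ε` for all `k, k'`. -/
theorem topological_multidimensional_brown {X : Type*} [MetricSpace X] [CompactSpace X]
    [Nonempty X] (l : ℕ) (T : Fin l → Equiv.Perm X)
    (hTcont : ∀ i, Continuous (T i)) (hTcont' : ∀ i, Continuous (T i).symm)
    (hcomm : ∀ i j, Commute (T i) (T j)) (ε : ℝ) (hε : 0 < ε) :
    ∃ q : ℕ, ∃ x : ℕ → X,
      (∀ k : ℕ, ∃ u : Fin l → Fin l → ℤ,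
        (∀ i j, |u i j| ≤ (q : ℤ)) ∧
        ∀ i : Fin l,
          dist (x k) (((T i ^ (k : ℤ)) * (List.ofFn fun j => T j ^ (u i j)).prod) (x k)) < ε) ∧
      ∀ k k' : ℕ, dist (x k) (x k') < ε := by
  classical
  set P : (Fin l → ℤ) → Equiv.Perm X := fun v => (List.ofFn fun j => T j ^ (v j)).prod with hPdef
  have hPadd : ∀ v w, P (v + w) = P v * P w := fun v w => brown_prod_add T hcomm v w
  have hPcont : ∀ v, Continuous ⇑(P v) := by
    intro v
    refine brown_cont_list_prod _ ?_
    intro σ hσ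
    rw [List.mem_ofFn] at hσ
    obtain ⟨j, rfl⟩ := hσ
    exact brown_cont_zpow _ (hTcont j) (hTcont' j) _
  have hPsingle : ∀ (i : Fin l) (k : ℤ), P (Pi.single i k) = T i ^ k := by
    intro i k
    set e : Fin l → ℤ := Pi.single i k with hedef
    have := brown_prod_single (fun j => T j ^ (e j)) i
      (fun j hj => by simp [hedef, Pi.single_eq_of_ne hj])
    rw [hPdef]
    simpa [hedef, Pi.single_eq_same] using this
  -- the collection of nonempty closed invariant sets
  set S : Set (Set X) := {Y | Y.Nonempty ∧ IsClosed Y ∧ ∀ v, P v '' Y ⊆ Y} with hSdef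
  have hXS : Set.univ ∈ S := ⟨Set.univ_nonempty, isClosed_univ, fun v => Set.subset_univ _⟩
  have hchainlb : ∀ c ⊆ S, IsChain (· ⊆ ·) c → c.Nonempty → ∃ lb ∈ S, ∀ s ∈ c, lb ⊆ s := by
    intro c hcS hchain hcne
    refine ⟨⋂₀ c, ⟨?_, ?_, ?_⟩, fun s hs => Set.sInter_subset_of_mem hs⟩
    · haveI : Nonempty c := hcne.to_subtype
      refine IsCompact.nonempty_sInter_of_directed_nonempty_isCompact_isClosed
        (fun x hx y hy => hchain.total hx hy |>.elim
          (fun h => ⟨x, hx, Set.Subset.refl x, h⟩) (fun h => ⟨y, hy, h, Set.Subset.refl y⟩))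
        (fun u hu => (hcS hu).1)
        (fun u hu => (hcS hu).2.1.isCompact) (fun u hu => (hcS hu).2.1)
    · exact isClosed_sInter fun u hu => (hcS hu).2.1
    · intro v
      refine fun x hx => Set.mem_sInter.2 fun u hu => ?_
      obtain ⟨y, hy, rfl⟩ := hx
      exact (hcS hu).2.2 v ⟨y, Set.mem_sInter.1 hy u hu, rfl⟩
  obtain ⟨Y, -, hYmin⟩ := zorn_superset_nonempty S hchainlb Set.univ hXS
  have hYS : Y ∈ S := hYmin.1
  obtain ⟨hYne, hYcl, hYinv⟩ := hYS
  obtain ⟨y₀, hy₀⟩ := hYne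
  -- every orbit in Y is dense in Y
  have horbit : ∀ y ∈ Y, Y ⊆ closure (Set.range fun v => P v y) := by
    intro y hy
    set Z := closure (Set.range fun v => P v y) with hZdef
    have hZsub : Z ⊆ Y := by
      refine closure_minimal ?_ hYcl
      rintro z ⟨v, rfl⟩
      exact hYinv v ⟨y, hy, rfl⟩
    have hZS : Z ∈ S := by
      refine ⟨⟨P 0 y, subset_closure ⟨0, rfl⟩⟩, isClosed_closure, fun v => ?_⟩
      refine (image_closure_subset_closure_image (hPcont v)).trans (closure_mono ?_)
      rintro z ⟨_, ⟨w, rfl⟩, rfl⟩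
      exact ⟨v + w, by show P (v + w) y = P v (P w y); rw [hPadd]; rfl⟩
    have := hYmin.2 hZS hZsub
    rw [hZdef] at this ⊢
    exact this
  -- finite subcover
  have hcover : Y ⊆ ⋃ v : Fin l → ℤ, (fun x => P v x) ⁻¹' Metric.ball y₀ ε := by
    intro y hy
    have := horbit y hy hy₀
    rw [Metric.mem_closure_iff] at this
    obtain ⟨z, ⟨v, rfl⟩, hz⟩ := this ε hε
    exact Set.mem_iUnion.2 ⟨v, by simpa [Metric.mem_ball, dist_comm] using hz⟩
  obtain ⟨F, hF⟩ := (hYcl.isCompact).elim_finite_subcover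
    (fun v : Fin l → ℤ => (fun x => P v x) ⁻¹' Metric.ball y₀ ε)
    (fun v => (Metric.isOpen_ball).preimage (hPcont v)) hcover
  refine ⟨F.sup fun g => Finset.univ.sup fun j => (g j).natAbs, fun _ => y₀, ?_, ?_⟩
  · intro k
    -- for each i, find a bounded correction
    have hstep : ∀ i : Fin l, ∃ g ∈ F, dist y₀ ((P (g + Pi.single i (k : ℤ))) y₀) < ε := by
      intro i
      have hmem : P (Pi.single i (k : ℤ)) y₀ ∈ Y := hYinv _ ⟨y₀, hy₀, rfl⟩
      obtain ⟨g, hgF, hg⟩ := Set.mem_iUnion₂.1 (hF hmem)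
      refine ⟨g, hgF, ?_⟩
      rw [Set.mem_preimage, Metric.mem_ball] at hg
      have heq : (P (g + Pi.single i (k : ℤ))) y₀ = (P g) ((P (Pi.single i (k : ℤ))) y₀) := by
        rw [hPadd]; rfl
      rw [dist_comm, heq]
      exact hg
    choose g hgF hgd using hstep
    refine ⟨fun i => g i, ?_, ?_⟩
    · intro i j
      have h1 : (g i j).natAbs ≤ Finset.univ.sup fun j => (g i j).natAbs :=
        Finset.le_sup (f := fun j => (g i j).natAbs) (Finset.mem_univ j)
      have h2 : (Finset.univ.sup fun j => (g i j).natAbs)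
          ≤ F.sup fun g => Finset.univ.sup fun j => (g j).natAbs :=
        Finset.le_sup (f := fun g : Fin l → ℤ => Finset.univ.sup fun j => (g j).natAbs) (hgF i)
      rw [Int.abs_eq_natAbs]
      exact_mod_cast h1.trans h2
    · intro i
      have key : (T i ^ (k : ℤ)) * P (g i) = P (g i + Pi.single i (k : ℤ)) := by
        rw [← hPsingle i (k : ℤ), ← hPadd, add_comm]
      show dist y₀ (((T i ^ (k : ℤ)) * P (g i)) y₀) < ε
      rw [key]
      exact hgd i
  · intro k k'
    simpa using hε
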